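/- Let $k$ be a field with $\mathrm{char}(k) \neq 2$ and let $C = k[[x,y]]/(y^2 - x^4)$. Then $C$ is isomorphic to the subring of $k[[t]] \times k[[t]]$ consisting of pairs $(p(t), q(t))$ with $p(0) = q(0)$ and $p'(0) = q'(0)$ (power series agreeing up to degree 1). -/

import Mathlib

set_option synthInstance.maxHeartbeats 1000000
set_option maxHeartbeats 1000000

/-- The subalgebra of `k[[t]] × k[[t]]` of pairs of power series that agree modulo `t^m`,
i.e. agree up to degree `m - 1`. -/
def pairsAgreeing (k : Type*) [CommRing k] (m : ℕ) :
    Subalgebra k (PowerSeries k × PowerSeries k) where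
  carrier := {x | x.1 - x.2 ∈ Ideal.span {(PowerSeries.X : PowerSeries k) ^ m}}
  mul_mem' := by
    intro a b ha hb
    simp only [Set.mem_setOf_eq] at *
    have h : (a * b).1 - (a * b).2 = a.1 * (b.1 - b.2) + (a.1 - a.2) * b.2 := by
      simp only [Prod.fst_mul, Prod.snd_mul]; ring
    rw [h]
    exact Ideal.add_mem _ (Ideal.mul_mem_left _ _ hb) (Ideal.mul_mem_right _ _ ha)
  one_mem' := by simp
  add_mem' := by
    intro a b ha hb
    simp only [Set.mem_setOf_eq] at *
    have h : (a + b).1 - (a + b).2 = (a.1 - a.2) + (b.1 - b.2) := by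
      simp only [Prod.fst_add, Prod.snd_add]; ring
    rw [h]
    exact Ideal.add_mem _ ha hb
  zero_mem' := by simp
  algebraMap_mem' := by intro c; simp

namespace Stmt8Aux
open Finset
noncomputable section
variable {k : Type*} [CommRing k]

def mk2 (i j : ℕ) : Fin 2 →₀ ℕ := Finsupp.single 0 i + Finsupp.single 1 j
@[simp] lemma mk2_apply0 (i j : ℕ) : mk2 i j 0 = i := by simp [mk2, Finsupp.single_apply]
@[simp] lemma mk2_apply1 (i j : ℕ) : mk2 i j 1 = j := by simp [mk2, Finsupp.single_apply]
lemma eq_mk2 (e : Fin 2 →₀ ℕ) : e = mk2 (e 0) (e 1) := by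
  ext i; fin_cases i <;> simp [mk2, Finsupp.single_apply]
def dg (e : Fin 2 →₀ ℕ) : ℕ := e 0 + 2 * e 1
lemma dg_add (e f : Fin 2 →₀ ℕ) : dg (e + f) = dg e + dg f := by simp [dg]; ring
lemma dg_mk2 (i j : ℕ) : dg (mk2 i j) = i + 2 * j := by simp [dg]
def S (n : ℕ) : Finset (Fin 2 →₀ ℕ) := (Finset.range (n / 2 + 1)).image fun j => mk2 (n - 2 * j) j
lemma injOn_S (n : ℕ) : ∀ x ∈ range (n/2+1), ∀ y ∈ range (n/2+1),
    mk2 (n - 2*x) x = mk2 (n - 2*y) y → x = y := by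
  intro x _ y _ h
  have := congrArg (fun e : Fin 2 →₀ ℕ => e 1) h
  simpa using this
lemma mem_S {n : ℕ} {e : Fin 2 →₀ ℕ} : e ∈ S n ↔ dg e = n := by
  constructor
  · intro h
    rw [S, Finset.mem_image] at h
    obtain ⟨j, hj, rfl⟩ := h
    rw [Finset.mem_range] at hj
    rw [dg_mk2]; omega
  · intro h
    rw [dg] at h
    rw [S, Finset.mem_image]
    refine ⟨e 1, ?_, ?_⟩
    · rw [Finset.mem_range]; omega
    · have h0 : n - 2 * e 1 = e 0 := by omega
      rw [h0, ← eq_mk2]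
def evFun (s : k) (F : MvPowerSeries (Fin 2) k) : PowerSeries k :=
  PowerSeries.mk fun n => ∑ e ∈ S n, s ^ (e 1) * MvPowerSeries.coeff e F
lemma coeff_evFun' (s : k) (F : MvPowerSeries (Fin 2) k) (n : ℕ) :
    PowerSeries.coeff n (evFun s F) = ∑ e ∈ S n, s ^ (e 1) * MvPowerSeries.coeff e F := by
  rw [evFun, PowerSeries.coeff_mk]
lemma coeff_evFun (s : k) (F : MvPowerSeries (Fin 2) k) (n : ℕ) :
    PowerSeries.coeff n (evFun s F)
      = ∑ j ∈ range (n/2+1), s ^ j * MvPowerSeries.coeff (mk2 (n - 2*j) j) F := by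
  rw [coeff_evFun', S, Finset.sum_image (injOn_S n)]; simp

-- NEW PART

lemma evFun_monomial (s : k) (e : Fin 2 →₀ ℕ) (a : k) :
    evFun s (MvPowerSeries.monomial e a) = PowerSeries.monomial (dg e) (s ^ (e 1) * a) := by
  classical
  ext n
  rw [coeff_evFun', PowerSeries.coeff_monomial]
  have h : ∀ f ∈ S n, s ^ (f 1) * MvPowerSeries.coeff f (MvPowerSeries.monomial e a)
      = if f = e then s ^ (f 1) * a else 0 := by
    intro f _
    rw [MvPowerSeries.coeff_monomial]
    split <;> simp
  rw [Finset.sum_congr rfl h, Finset.sum_ite_eq' (S n) e (fun f => s ^ (f 1) * a)]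
  by_cases hd : dg e = n
  · rw [if_pos (mem_S.mpr hd), if_pos hd.symm]
  · rw [if_neg (fun hc => hd (mem_S.mp hc)), if_neg (fun hc => hd hc.symm)]

lemma evFun_C (s : k) (a : k) :
    evFun s (MvPowerSeries.C a) = PowerSeries.C a := by
  have h1 : (MvPowerSeries.C a : MvPowerSeries (Fin 2) k) = MvPowerSeries.monomial 0 a := rfl
  rw [h1, evFun_monomial]
  simp [dg]

lemma evFun_add (s : k) (F G : MvPowerSeries (Fin 2) k) :
    evFun s (F + G) = evFun s F + evFun s G := by
  ext n
  simp [coeff_evFun', mul_add, Finset.sum_add_distrib]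

lemma evFun_mul (s : k) (F G : MvPowerSeries (Fin 2) k) :
    evFun s (F * G) = evFun s F * evFun s G := by
  classical
  ext n
  rw [PowerSeries.coeff_mul]
  simp only [coeff_evFun']
  calc
    ∑ e ∈ S n, s ^ e 1 * MvPowerSeries.coeff e (F * G)
        = ∑ e ∈ S n, ∑ p ∈ Finset.HasAntidiagonal.antidiagonal e,
            (s ^ p.1 1 * MvPowerSeries.coeff p.1 F) * (s ^ p.2 1 * MvPowerSeries.coeff p.2 G) := by
      refine Finset.sum_congr rfl fun e _ => ?_
      rw [MvPowerSeries.coeff_mul, Finset.mul_sum]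
      refine Finset.sum_congr rfl fun p hp => ?_
      have hpe : p.1 + p.2 = e := Finset.HasAntidiagonal.mem_antidiagonal.mp hp
      have h1 : e 1 = p.1 1 + p.2 1 := by rw [← hpe]; simp
      rw [h1, pow_add]; ring
    _ = ∑ x ∈ (S n).sigma (fun e => Finset.HasAntidiagonal.antidiagonal e),
            (s ^ x.2.1 1 * MvPowerSeries.coeff x.2.1 F)
              * (s ^ x.2.2 1 * MvPowerSeries.coeff x.2.2 G) := by
      rw [Finset.sum_sigma']
    _ = ∑ x ∈ (Finset.HasAntidiagonal.antidiagonal n).sigma (fun p => S p.1 ×ˢ S p.2),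
            (s ^ x.2.1 1 * MvPowerSeries.coeff x.2.1 F)
              * (s ^ x.2.2 1 * MvPowerSeries.coeff x.2.2 G) := by
      refine Finset.sum_bij (fun x _ => ⟨(dg x.2.1, dg x.2.2), x.2⟩) ?_ ?_ ?_ ?_
      · rintro ⟨e, p⟩ hx
        rw [Finset.mem_sigma] at hx ⊢
        obtain ⟨he, hp⟩ := hx
        have hpe : p.1 + p.2 = e := Finset.HasAntidiagonal.mem_antidiagonal.mp hp
        constructor
        · rw [Finset.HasAntidiagonal.mem_antidiagonal, ← dg_add, hpe]
          exact mem_S.mp he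
        · rw [Finset.mem_product]
          exact ⟨mem_S.mpr rfl, mem_S.mpr rfl⟩
      · rintro ⟨e, p⟩ hx ⟨e', p'⟩ hx' h
        rw [Finset.mem_sigma] at hx hx'
        obtain ⟨h1, h2⟩ := Sigma.mk.inj_iff.mp h
        have hp : p = p' := eq_of_heq h2
        have a1 : p.1 + p.2 = e := Finset.HasAntidiagonal.mem_antidiagonal.mp hx.2
        have a2 : p'.1 + p'.2 = e' := Finset.HasAntidiagonal.mem_antidiagonal.mp hx'.2
        have he : e = e' := by rw [← a1, ← a2, hp]
        subst hp; subst he; rfl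
      · rintro ⟨p, q⟩ hx
        rw [Finset.mem_sigma, Finset.mem_product] at hx
        obtain ⟨hp, hq1, hq2⟩ := hx
        refine ⟨⟨q.1 + q.2, q⟩, ?_, ?_⟩
        · rw [Finset.mem_sigma]
          constructor
          · rw [mem_S, dg_add, mem_S.mp hq1, mem_S.mp hq2]
            exact Finset.HasAntidiagonal.mem_antidiagonal.mp hp
          · exact Finset.HasAntidiagonal.mem_antidiagonal.mpr rfl
        · have e1 : dg q.1 = p.1 := mem_S.mp hq1
          have e2 : dg q.2 = p.2 := mem_S.mp hq2
          simp [e1, e2]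
      · intro x _; rfl
    _ = ∑ p ∈ Finset.HasAntidiagonal.antidiagonal n,
          (∑ e ∈ S p.1, s ^ e 1 * MvPowerSeries.coeff e F)
            * (∑ f ∈ S p.2, s ^ f 1 * MvPowerSeries.coeff f G) := by
      rw [Finset.sum_sigma]
      refine Finset.sum_congr rfl fun p _ => ?_
      rw [Finset.sum_product]
      exact (Finset.sum_mul_sum (S p.1) (S p.2)
        (fun e => s ^ e 1 * MvPowerSeries.coeff e F)
        (fun f => s ^ f 1 * MvPowerSeries.coeff f G)).symm

/-- Evaluation `F(x,y) ↦ F(t, s·t²)` as an algebra hom. -/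
def ev (s : k) : MvPowerSeries (Fin 2) k →ₐ[k] PowerSeries k where
  toFun := evFun s
  map_one' := by
    have h1 : (1 : MvPowerSeries (Fin 2) k) = MvPowerSeries.C 1 := (map_one _).symm
    rw [h1, evFun_C, map_one]
  map_mul' := evFun_mul s
  map_zero' := by
    ext n
    simp [coeff_evFun']
  map_add' := evFun_add s
  commutes' := by
    intro a
    rw [MvPowerSeries.algebraMap_apply, PowerSeries.algebraMap_apply]
    simp [evFun_C]

lemma ev_apply (s : k) (F : MvPowerSeries (Fin 2) k) : ev s F = evFun s F := rfl

lemma ev_X0 (s : k) : ev s (MvPowerSeries.X 0) = PowerSeries.X := by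
  rw [ev_apply, ← pow_one (MvPowerSeries.X 0 : MvPowerSeries (Fin 2) k),
    MvPowerSeries.X_pow_eq, evFun_monomial, PowerSeries.X_eq]
  have h1 : dg (Finsupp.single (0 : Fin 2) 1) = 1 := by
    simp [dg, Finsupp.single_apply]
  have h2 : (Finsupp.single (0 : Fin 2) 1) 1 = 0 := by
    simp [Finsupp.single_apply]
  rw [h1, h2]
  simp

lemma ev_X1 (s : k) : ev s (MvPowerSeries.X 1) = PowerSeries.monomial 2 s := by
  rw [ev_apply, ← pow_one (MvPowerSeries.X 1 : MvPowerSeries (Fin 2) k),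
    MvPowerSeries.X_pow_eq, evFun_monomial]
  have h1 : dg (Finsupp.single (1 : Fin 2) 1) = 2 := by
    simp [dg, Finsupp.single_apply]
  have h2 : (Finsupp.single (1 : Fin 2) 1) 1 = 1 := by
    simp [Finsupp.single_apply]
  rw [h1, h2]
  simp

lemma ev_g (s : k) (hs : s * s = 1) :
    ev s ((MvPowerSeries.X 1 : MvPowerSeries (Fin 2) k) ^ 2 - (MvPowerSeries.X 0) ^ 4) = 0 := by
  rw [map_sub, map_pow, map_pow, ev_X0, ev_X1]
  have hm : PowerSeries.monomial 2 s = s • (PowerSeries.X ^ 2 : PowerSeries k) := by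
    rw [PowerSeries.X_pow_eq, ← map_smul]
    simp [smul_eq_mul]
  rw [hm, smul_pow, ← pow_mul, pow_two, hs, one_smul]
  norm_num

/-- The inclusion `k[[t]] → k[[x,y]]`, `t ↦ x`. -/
def jmap (c : PowerSeries k) : MvPowerSeries (Fin 2) k :=
  fun e => if e 1 = 0 then PowerSeries.coeff (e 0) c else 0

lemma coeff_jmap (c : PowerSeries k) (e : Fin 2 →₀ ℕ) :
    MvPowerSeries.coeff e (jmap c) = if e 1 = 0 then PowerSeries.coeff (e 0) c else 0 := rfl

lemma ev_jmap (s : k) (c : PowerSeries k) : ev s (jmap c) = c := by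
  ext n
  rw [ev_apply, coeff_evFun]
  have h : ∀ j ∈ range (n/2+1), s ^ j * MvPowerSeries.coeff (mk2 (n - 2*j) j) (jmap c)
      = if j = 0 then PowerSeries.coeff n c else 0 := by
    intro j _
    rw [coeff_jmap]
    simp only [mk2_apply0, mk2_apply1]
    split_ifs with h1
    · subst h1; simp
    · simp
  rw [Finset.sum_congr rfl h, Finset.sum_ite_eq' (range (n/2+1)) 0 (fun _ => PowerSeries.coeff n c)]
  simp

/-! ### Division by `y² - x⁴` -/

/-- `Qc F u v = ∑_{t ≤ u/4} F_{(u-4t, v+2t)}`. -/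
def Qc (F : MvPowerSeries (Fin 2) k) (u v : ℕ) : k :=
  ∑ t ∈ range (u/4+1), MvPowerSeries.coeff (mk2 (u - 4*t) (v + 2*t)) F

lemma Qc_eq (F : MvPowerSeries (Fin 2) k) (u v : ℕ) :
    Qc F u v = MvPowerSeries.coeff (mk2 u v) F
      + (if 4 ≤ u then Qc F (u-4) (v+2) else 0) := by
  by_cases h : 4 ≤ u
  · rw [if_pos h, Qc, Finset.sum_range_succ', add_comm]
    congr 1
    · rw [Qc, show u/4 = (u-4)/4 + 1 from by omega]
      refine Finset.sum_congr rfl fun t _ => ?_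
      rw [show u - 4*(t+1) = u - 4 - 4*t from by omega,
        show v + 2*(t+1) = v + 2 + 2*t from by omega]
  · rw [if_neg h, add_zero, Qc, show u/4 = 0 from by omega, Finset.sum_range_one,
      show u - 4*0 = u from by omega, show v + 2*0 = v from by omega]

/-- The quotient in the division of `F` by `y² - x⁴`. -/
def Qq (F : MvPowerSeries (Fin 2) k) : MvPowerSeries (Fin 2) k :=
  fun e => Qc F (e 0) (e 1 + 2)

lemma coeff_Qq (F : MvPowerSeries (Fin 2) k) (e : Fin 2 →₀ ℕ) :
    MvPowerSeries.coeff e (Qq F) = Qc F (e 0) (e 1 + 2) := rfl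

/-- The even part remainder. -/
def Aa (F : MvPowerSeries (Fin 2) k) : PowerSeries k := PowerSeries.mk fun n => Qc F n 0

/-- The odd part remainder. -/
def Bb (F : MvPowerSeries (Fin 2) k) : PowerSeries k := PowerSeries.mk fun n => Qc F n 1

lemma X1_eq : (MvPowerSeries.X 1 : MvPowerSeries (Fin 2) k)
    = MvPowerSeries.monomial (Finsupp.single 1 1) 1 := by
  rw [← MvPowerSeries.X_pow_eq, pow_one]

lemma division (F : MvPowerSeries (Fin 2) k) :
    F = Qq F * ((MvPowerSeries.X 1 : MvPowerSeries (Fin 2) k) ^ 2 - (MvPowerSeries.X 0) ^ 4)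
      + (jmap (Aa F) + MvPowerSeries.X 1 * jmap (Bb F)) := by
  classical
  apply MvPowerSeries.ext
  intro e
  obtain ⟨u, v, rfl⟩ : ∃ u v, e = mk2 u v := ⟨e 0, e 1, eq_mk2 e⟩
  rw [map_add, map_add, mul_sub, map_sub, MvPowerSeries.X_pow_eq, MvPowerSeries.X_pow_eq,
    MvPowerSeries.coeff_mul_monomial, MvPowerSeries.coeff_mul_monomial,
    X1_eq, MvPowerSeries.coeff_monomial_mul, coeff_jmap]
  have hle1 : (Finsupp.single (1:Fin 2) 2 ≤ mk2 u v) ↔ 2 ≤ v := by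
    rw [Finsupp.single_le_iff, mk2_apply1]
  have hle2 : (Finsupp.single (0:Fin 2) 4 ≤ mk2 u v) ↔ 4 ≤ u := by
    rw [Finsupp.single_le_iff, mk2_apply0]
  have hle3 : (Finsupp.single (1:Fin 2) 1 ≤ mk2 u v) ↔ 1 ≤ v := by
    rw [Finsupp.single_le_iff, mk2_apply1]
  have hsub1 : mk2 u v - Finsupp.single (1:Fin 2) 2 = mk2 u (v - 2) := by
    ext i; fin_cases i <;> simp [Finsupp.tsub_apply, Finsupp.single_apply]
  have hsub2 : mk2 u v - Finsupp.single (0:Fin 2) 4 = mk2 (u - 4) v := by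
    ext i; fin_cases i <;> simp [Finsupp.tsub_apply, Finsupp.single_apply]
  have hsub3 : mk2 u v - Finsupp.single (1:Fin 2) 1 = mk2 u (v - 1) := by
    ext i; fin_cases i <;> simp [Finsupp.tsub_apply, Finsupp.single_apply]
  rw [hsub1, hsub2, hsub3]
  simp only [hle1, hle2, hle3, mk2_apply0, mk2_apply1, coeff_Qq, coeff_jmap, mul_one, one_mul,
    Aa, Bb, PowerSeries.coeff_mk]
  rcases v with _ | _ | w
  · rw [Qc_eq F u 0]
    split_ifs <;> first | ring1 | (exfalso; first | omega | assumption)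
  · rw [Qc_eq F u 1]
    split_ifs <;> first | ring1 | (exfalso; first | omega | assumption)
  · rw [show w+1+1-2+2 = w+1+1 from by omega, Qc_eq F u (w+1+1)]
    split_ifs <;> first | ring1 | (exfalso; first | omega | assumption)

end
end Stmt8Aux

open Stmt8Aux

/-- for `char k ≠ 2`, the tacnode algebra `k[[x,y]]/(y² - x⁴)` is isomorphic
to the subring of `k[[t]] × k[[t]]` of pairs of power series agreeing up to degree 1. -/
theorem stmt_8 (k : Type*) [Field k] (hchar : (2 : k) ≠ 0) :
    Nonempty ((MvPowerSeries (Fin 2) k ⧸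
        Ideal.span {(MvPowerSeries.X 1 : MvPowerSeries (Fin 2) k) ^ 2 -
          (MvPowerSeries.X 0) ^ 4}) ≃ₐ[k] pairsAgreeing k 2) := by
  classical
  have hmem : ∀ F : MvPowerSeries (Fin 2) k,
      ((ev (1:k)).prod (ev (-1:k))) F ∈ pairsAgreeing k 2 := by
    intro F
    show (ev (1:k) F) - (ev (-1:k) F) ∈ Ideal.span {(PowerSeries.X : PowerSeries k) ^ 2}
    rw [Ideal.mem_span_singleton, PowerSeries.X_pow_dvd_iff]
    intro m hm
    rw [map_sub]
    interval_cases m <;>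
      simp [ev_apply, coeff_evFun]
  set Φ' := ((ev (1:k)).prod (ev (-1:k))).codRestrict (pairsAgreeing k 2) hmem with hΦ'
  have hg1 : ev (1:k) ((MvPowerSeries.X 1 : MvPowerSeries (Fin 2) k) ^ 2
      - (MvPowerSeries.X 0) ^ 4) = 0 := ev_g 1 (by ring)
  have hgm : ev (-1:k) ((MvPowerSeries.X 1 : MvPowerSeries (Fin 2) k) ^ 2
      - (MvPowerSeries.X 0) ^ 4) = 0 := ev_g (-1) (by ring)
  have hgz : Φ' ((MvPowerSeries.X 1 : MvPowerSeries (Fin 2) k) ^ 2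
      - (MvPowerSeries.X 0) ^ 4) = 0 := by
    apply Subtype.ext
    show ((ev (1:k)).prod (ev (-1:k))) _ = (0 : PowerSeries k × PowerSeries k)
    rw [AlgHom.prod_apply, hg1, hgm]
    rfl
  have hker : ∀ a ∈ Ideal.span {(MvPowerSeries.X 1 : MvPowerSeries (Fin 2) k) ^ 2 -
      (MvPowerSeries.X 0) ^ 4}, Φ' a = 0 := by
    intro a ha
    rw [Ideal.mem_span_singleton] at ha
    obtain ⟨c, rfl⟩ := ha
    rw [map_mul, hgz, zero_mul]
  refine ⟨AlgEquiv.ofBijective (Ideal.Quotient.liftₐ _ Φ' hker) ⟨?_, ?_⟩⟩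
  · rw [injective_iff_map_eq_zero]
    intro x hx
    obtain ⟨F, rfl⟩ := Ideal.Quotient.mk_surjective x
    change Φ' F = 0 at hx
    have hx' : ((ev (1:k)).prod (ev (-1:k))) F = (0 : PowerSeries k × PowerSeries k) :=
      congrArg Subtype.val hx
    have h1 : ev (1:k) F = 0 := congrArg Prod.fst hx'
    have h2 : ev (-1:k) F = 0 := congrArg Prod.snd hx'
    have hdiv := division F
    have e1 : (0 : PowerSeries k) = Aa F + PowerSeries.monomial 2 (1:k) * Bb F := by
      rw [← h1]
      conv_lhs => rw [hdiv]
      rw [map_add, map_mul, hg1, mul_zero, zero_add, map_add, ev_jmap, map_mul, ev_X1, ev_jmap]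
    have e2 : (0 : PowerSeries k) = Aa F + PowerSeries.monomial 2 (-1:k) * Bb F := by
      rw [← h2]
      conv_lhs => rw [hdiv]
      rw [map_add, map_mul, hgm, mul_zero, zero_add, map_add, ev_jmap, map_mul, ev_X1, ev_jmap]
    have hBm : PowerSeries.monomial 2 (-1:k) = - PowerSeries.monomial 2 (1:k) := by
      rw [← map_neg]
    rw [hBm] at e2
    have hA : Aa F = 0 := by
      have hsum : Aa F + Aa F = 0 := by
        calc Aa F + Aa F
            = (Aa F + PowerSeries.monomial 2 (1:k) * Bb F)
              + (Aa F + (- PowerSeries.monomial 2 (1:k)) * Bb F) := by ring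
          _ = 0 := by rw [← e1, ← e2]; ring
      ext n
      have hc := congrArg (PowerSeries.coeff n) hsum
      rw [map_add, map_zero] at hc
      have h2c : (2:k) * PowerSeries.coeff n (Aa F) = 0 := by rw [two_mul]; exact hc
      rcases mul_eq_zero.mp h2c with h | h
      · exact absurd h hchar
      · simpa using h
    have hB : Bb F = 0 := by
      have hz : PowerSeries.monomial 2 (1:k) * Bb F = 0 := by
        rw [hA, zero_add] at e1; exact e1.symm
      rcases mul_eq_zero.mp hz with h | h
      · exfalso
        rw [← PowerSeries.X_pow_eq] at h
        exact pow_ne_zero 2 PowerSeries.X_ne_zero h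
      · exact h
    have hj0 : jmap (0 : PowerSeries k) = (0 : MvPowerSeries (Fin 2) k) := by
      apply MvPowerSeries.ext
      intro e
      rw [coeff_jmap]
      simp
    rw [hA, hB, hj0] at hdiv
    rw [Ideal.Quotient.eq_zero_iff_mem, Ideal.mem_span_singleton]
    refine ⟨Qq F, ?_⟩
    rw [mul_comm]
    simpa using hdiv
  · rintro ⟨⟨p, q⟩, hpq⟩
    have hpq' : (PowerSeries.X : PowerSeries k) ^ 2 ∣ (p - q) :=
      Ideal.mem_span_singleton.mp hpq
    obtain ⟨h, hh⟩ := hpq'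
    refine ⟨Ideal.Quotient.mk _ (jmap (PowerSeries.C (2:k)⁻¹ * (p + q))
      + MvPowerSeries.X 1 * jmap (PowerSeries.C (2:k)⁻¹ * h)), ?_⟩
    change Φ' _ = _
    apply Subtype.ext
    show ((ev (1:k)).prod (ev (-1:k))) _ = ((p, q) : PowerSeries k × PowerSeries k)
    have h2C : (2 : PowerSeries k) = PowerSeries.C (2:k) := (map_ofNat (PowerSeries.C (R := k)) 2).symm
    have hCC : PowerSeries.C (2:k)⁻¹ * (2 : PowerSeries k) = 1 := by
      rw [h2C, ← map_mul, inv_mul_cancel₀ hchar, map_one]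
    rw [AlgHom.prod_apply]
    have hfst : ev (1:k) (jmap (PowerSeries.C (2:k)⁻¹ * (p + q))
        + MvPowerSeries.X 1 * jmap (PowerSeries.C (2:k)⁻¹ * h)) = p := by
      rw [map_add, map_mul, ev_jmap, ev_jmap, ev_X1, ← PowerSeries.X_pow_eq]
      calc PowerSeries.C (2:k)⁻¹ * (p + q)
            + PowerSeries.X ^ 2 * (PowerSeries.C (2:k)⁻¹ * h)
          = PowerSeries.C (2:k)⁻¹ * ((p + q) + PowerSeries.X ^ 2 * h) := by ring
        _ = PowerSeries.C (2:k)⁻¹ * ((p + q) + (p - q)) := by rw [← hh]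
        _ = (PowerSeries.C (2:k)⁻¹ * 2) * p := by ring
        _ = p := by rw [hCC, one_mul]
    have hsnd : ev (-1:k) (jmap (PowerSeries.C (2:k)⁻¹ * (p + q))
        + MvPowerSeries.X 1 * jmap (PowerSeries.C (2:k)⁻¹ * h)) = q := by
      rw [map_add, map_mul, ev_jmap, ev_jmap, ev_X1]
      have hBm : PowerSeries.monomial 2 (-1:k) = - (PowerSeries.X ^ 2 : PowerSeries k) := by
        rw [PowerSeries.X_pow_eq, ← map_neg]
      rw [hBm]
      calc PowerSeries.C (2:k)⁻¹ * (p + q)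
            + (- (PowerSeries.X ^ 2 : PowerSeries k)) * (PowerSeries.C (2:k)⁻¹ * h)
          = PowerSeries.C (2:k)⁻¹ * ((p + q) - PowerSeries.X ^ 2 * h) := by ring
        _ = PowerSeries.C (2:k)⁻¹ * ((p + q) - (p - q)) := by rw [← hh]
        _ = (PowerSeries.C (2:k)⁻¹ * 2) * q := by ring
        _ = q := by rw [hCC, one_mul]
    rw [hfst, hsnd]
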